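/- Let (R,B) be a ℤ-based rng and b ∈ B. Then there exists a natural number m ≥ 1 such that τ(b^m) ≠ 0. -/

import Mathlib

open scoped BigOperators

open scoped Matrix


open Polynomial in
lemma key_normal_lemma {E : Type*} [NormedAddCommGroup E] [InnerProductSpace ℂ E]
    [FiniteDimensional ℂ E] (f : E →ₗ[ℂ] E)
    (hnormal : LinearMap.adjoint f ∘ₗ f = f ∘ₗ LinearMap.adjoint f)
    (v : E) (hv : ∀ m : ℕ, 1 ≤ m → (inner ℂ v ((f ^ m) v) : ℂ) = 0) : f v = 0 := by
  have hadj0 : ∀ x, f x = 0 → LinearMap.adjoint f x = 0 := by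
    intro x hx
    have h1 : (inner ℂ (LinearMap.adjoint f x) (LinearMap.adjoint f x) : ℂ)
        = inner ℂ (f x) (f x) := by
      rw [LinearMap.adjoint_inner_left]
      have : f (LinearMap.adjoint f x) = LinearMap.adjoint f (f x) := by
        have := congrArg (fun g => g x) hnormal.symm
        simpa using this
      rw [this, LinearMap.adjoint_inner_right]
    rw [hx] at h1
    simp only [inner_zero_right] at h1
    exact inner_self_eq_zero.mp h1
  have hker2 : ∀ x, f (f x) = 0 → f x = 0 := by
    intro x hx
    have h0 : LinearMap.adjoint f (f x) = 0 := hadj0 _ hx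
    have : (inner ℂ (f x) (f x) : ℂ) = 0 := by
      rw [← LinearMap.adjoint_inner_right, h0, inner_zero_right]
    exact inner_self_eq_zero.mp this
  have hkerpow : ∀ m : ℕ, ∀ x, (f ^ (m + 1)) x = 0 → f x = 0 := by
    intro m
    induction m with
    | zero => intro x hx; simpa using hx
    | succ k ih =>
      intro x hx
      have h2 : (f ^ (k + 1)) (f x) = 0 := by
        have h3 : (f ^ (k + 1 + 1)) x = (f ^ (k + 1)) (f x) := by
          rw [pow_succ]; rfl
        rw [← h3]; exact hx
      exact hker2 x (ih (f x) h2)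
  -- decompose v
  set K := LinearMap.ker f with hK
  set u : E := (K.orthogonalProjectionOnto v : E) with hu
  set w : E := v - u with hwdef
  have hwo : w ∈ Kᗮ := Submodule.sub_starProjection_mem_orthogonal (K := K) v
  have huK : u ∈ K := (K.orthogonalProjectionOnto v).2
  have hfu : f u = 0 := huK
  have hfadju : LinearMap.adjoint f u = 0 := hadj0 _ hfu
  -- inner products against w vanish
  have hcomm : ∀ (k : ℕ) (x : E), (f ^ k) (f x) = f ((f ^ k) x) := by
    intro k x
    rw [← Module.End.mul_apply, ← pow_succ, pow_succ', Module.End.mul_apply]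
  have hfw : ∀ m : ℕ, 1 ≤ m → (f ^ m) w = (f ^ m) v := by
    intro m hm
    obtain ⟨k, rfl⟩ := Nat.exists_eq_add_of_le hm
    have hpu : (f ^ (1 + k)) u = 0 := by
      rw [add_comm, pow_succ, Module.End.mul_apply, hfu, map_zero]
    rw [hwdef, map_sub, hpu, sub_zero]
  have hwm : ∀ m : ℕ, 1 ≤ m → (inner ℂ w ((f ^ m) w) : ℂ) = 0 := by
    intro m hm
    rw [hfw m hm, hwdef, sub_eq_add_neg, inner_add_left, inner_neg_left, hv m hm]
    obtain ⟨k, rfl⟩ := Nat.exists_eq_add_of_le hm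
    have : (f ^ (1 + k)) v = f ((f ^ k) v) := by
      rw [add_comm, pow_succ, Module.End.mul_apply, hcomm]
    rw [this]
    have : (inner ℂ u (f ((f ^ k) v)) : ℂ) = inner ℂ (LinearMap.adjoint f u) ((f ^ k) v) := by
      rw [LinearMap.adjoint_inner_left]
    rw [this, hfadju, inner_zero_left]
    simp
  -- inner of w against polynomials of f without constant term
  have hwp : ∀ p : ℂ[X], (inner ℂ w (f ((aeval f p) w)) : ℂ) = 0 := by
    intro p
    rw [aeval_eq_sum_range (x := f)]
    rw [LinearMap.sum_apply]
    rw [map_sum, inner_sum]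
    refine Finset.sum_eq_zero fun k _ => ?_
    rw [LinearMap.smul_apply, map_smul, inner_smul_right]
    have h1 : f ((f ^ k) w) = (f ^ (k + 1)) w := by
      rw [pow_succ, Module.End.mul_apply, hcomm]
    rw [h1, hwm (k + 1) (Nat.le_add_left 1 k), mul_zero]
  -- characteristic polynomial decomposition
  obtain ⟨q, hq, hqdvd⟩ := f.charpoly.exists_eq_pow_rootMultiplicity_mul_and_not_dvd
    (f.charpoly_monic.ne_zero) 0
  rw [map_zero, sub_zero] at hq hqdvd
  have hq0 : q.coeff 0 ≠ 0 := fun h => hqdvd (X_dvd_iff.mpr h)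
  -- z := q(f) w lies in ker f
  have hz : f ((aeval f q) w) = 0 := by
    have h0 : (aeval f f.charpoly) w = 0 := by rw [f.aeval_self_charpoly]; rfl
    rw [hq, map_mul, map_pow, aeval_X, Module.End.mul_apply] at h0
    rcases Nat.eq_zero_or_pos (rootMultiplicity 0 f.charpoly) with hr | hr
    · rw [hr, pow_zero, Module.End.one_apply] at h0
      rw [h0, map_zero]
    · obtain ⟨k, hk⟩ := Nat.exists_eq_add_of_le hr
      rw [hk, add_comm 1 k] at h0
      exact hkerpow k _ h0
  -- pairing
  have hzK : (aeval f q) w ∈ K := hz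
  have hzw : (inner ℂ ((aeval f q) w) w : ℂ) = 0 := hwo _ hzK
  have hwz : (inner ℂ w ((aeval f q) w) : ℂ) = 0 := by
    rw [← inner_conj_symm, hzw, map_zero]
  have hsplit : (aeval f q) w = (q.coeff 0) • w + f ((aeval f q.divX) w) := by
    conv_lhs => rw [← q.X_mul_divX_add]
    simp only [map_add, map_mul, aeval_X, aeval_C, LinearMap.add_apply, Module.End.mul_apply,
      Module.algebraMap_end_apply]
    exact add_comm _ _
  rw [hsplit, inner_add_right, inner_smul_right, hwp] at hwz
  have hww : (inner ℂ w w : ℂ) = 0 := by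
    have := hwz
    rw [add_zero] at this
    exact (mul_eq_zero.mp this).resolve_left hq0
  have hw0 : w = 0 := inner_self_eq_zero.mp hww
  have hvu : v = u := by rw [← sub_eq_zero]; exact hw0
  rw [hvu]; exact hfu


/-- Let `(R,B)` be a `ℤ`-based rng and `b i ∈ B`.  Then there
is a natural number `m ≥ 1` with `τ((b i)^m) ≠ 0`, where
`τ(x) = ∑ j, conj(e_j) ⬝ (coordinate of x at j)` and `e_j = b.repr 1 j`. -/
theorem zBasedRng_exists_pow_tau_ne_zero
    {n : ℕ} (A : Type*) [CommRing A] [Algebra ℂ A]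
    (b : Module.Basis (Fin n) ℂ A) (N : Fin n → Fin n → Fin n → ℤ) (σ : Fin n → Fin n)
    (hmul : ∀ i j, b i * b j = ∑ m, (N i j m : ℂ) • b m)
    (hσ : ∀ i, σ (σ i) = i)
    (hσN : ∀ i j m, N (σ i) (σ j) m = N i j (σ m))
    (hτ : ∀ i j, (∑ m, (starRingEnd ℂ) (b.repr 1 m) * (N (σ i) j m : ℂ)) =
      if i = j then (1 : ℂ) else 0)
    (he : ∀ j, (starRingEnd ℂ) (b.repr 1 (σ j)) = b.repr 1 j) :
    ∀ i : Fin n, ∃ m : ℕ, 1 ≤ m ∧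
      (∑ j, (starRingEnd ℂ) (b.repr 1 j) * b.repr ((b i) ^ m) j) ≠ 0 := by
  intro i
  by_contra hcon
  push_neg at hcon
  have hσinj : Function.Injective σ := Function.LeftInverse.injective hσ
  -- repr of a product of two basis vectors
  have hR : ∀ a c m, b.repr (b a * b c) m = (N a c m : ℂ) := by
    intro a c m
    rw [hmul, map_sum, Finsupp.finset_sum_apply]
    simp [Finsupp.single_apply]
  -- the linear functional τ
  set τl : A →ₗ[ℂ] ℂ := ∑ j, (starRingEnd ℂ) (b.repr 1 j) • b.coord j with hτl
  have hτl_apply : ∀ x, τl x = ∑ j, (starRingEnd ℂ) (b.repr 1 j) * b.repr x j := by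
    intro x
    simp [hτl, LinearMap.sum_apply, LinearMap.smul_apply, Module.Basis.coord_apply, smul_eq_mul]
  have hA : ∀ a c, τl (b (σ a) * b c) = if a = c then (1 : ℂ) else 0 := by
    intro a c
    rw [hτl_apply, ← hτ a c]
    refine Finset.sum_congr rfl fun m _ => ?_
    rw [hR]
  have hA' : ∀ k m, τl (b k * b (σ m)) = if k = m then (1 : ℂ) else 0 := by
    intro k m
    have := hA (σ k) (σ m)
    rw [hσ k] at this
    rw [this]
    simp [hσinj.eq_iff]
  -- τ(x · b_{σm}) extracts the m-th coordinate
  have hT : ∀ (x : A) (m : Fin n), τl (x * b (σ m)) = b.repr x m := by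
    intro x m
    conv_lhs => rw [← b.sum_repr x]
    rw [Finset.sum_mul]
    simp_rw [smul_mul_assoc]
    rw [map_sum]
    simp_rw [map_smul, smul_eq_mul, hA']
    simp
  -- Frobenius-type symmetry
  have hC : ∀ a c m, (N (σ a) c m : ℂ) = (N c (σ m) a : ℂ) := by
    intro a c m
    have h1 : (N (σ a) c m : ℂ) = τl ((b (σ a) * b c) * b (σ m)) := by
      rw [hT, hR]
    rw [h1, mul_assoc, hmul c (σ m), Finset.mul_sum]
    simp_rw [mul_smul_comm]
    rw [map_sum]
    simp_rw [map_smul, smul_eq_mul, hA]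
    simp
  have hB : ∀ a c m, (N a c m : ℂ) = (N c a m : ℂ) := by
    intro a c m
    rw [← hR, ← hR, mul_comm]
  -- the transpose identity
  have hNT : ∀ j m, (N (σ i) j m : ℂ) = (N i m j : ℂ) := by
    intro j m
    rw [hC i j m]
    have h2 : (N j (σ m) i : ℂ) = (N (σ m) (σ i) (σ j) : ℂ) := by
      conv_lhs => rw [← hσ j]
      exact hC (σ j) (σ m) i
    rw [h2]
    have h3 : N (σ m) (σ i) (σ j) = N m i j := by
      rw [hσN m i (σ j), hσ]
    rw [h3, hB m i j]
  -- coordinate action of multiplication by a basis element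
  have hE : ∀ (a : Fin n) (x : A) (m : Fin n),
      b.repr (b a * x) m = ∑ j, (N a j m : ℂ) * b.repr x j := by
    intro a x m
    conv_lhs => rw [← b.sum_repr x]
    rw [Finset.mul_sum]
    simp_rw [mul_smul_comm]
    rw [map_sum, Finsupp.finset_sum_apply]
    simp_rw [map_smul, Finsupp.smul_apply, hR, smul_eq_mul]
    exact Finset.sum_congr rfl fun j _ => mul_comm _ _
  -- the matrix of multiplication by b i
  set e : Fin n → ℂ := fun j => b.repr 1 j with he'
  set M : Matrix (Fin n) (Fin n) ℂ := Matrix.of fun m j => (N i j m : ℂ) with hM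
  have hMH : Mᴴ = Matrix.of fun m j => (N (σ i) j m : ℂ) := by
    ext m j
    rw [Matrix.conjTranspose_apply, hM]
    simp only [Matrix.of_apply]
    rw [hNT j m]
    simp
  -- normality
  have hD : ∀ j m, (∑ k, (N i k m : ℂ) * (N (σ i) j k : ℂ))
      = ∑ k, (N (σ i) k m : ℂ) * (N i j k : ℂ) := by
    intro j m
    have h1 : b.repr (b i * (b (σ i) * b j)) m = ∑ k, (N i k m : ℂ) * (N (σ i) j k : ℂ) := by
      rw [hE]
      exact Finset.sum_congr rfl fun k _ => by rw [hR]
    have h2 : b.repr (b (σ i) * (b i * b j)) m = ∑ k, (N (σ i) k m : ℂ) * (N i j k : ℂ) := by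
      rw [hE]
      exact Finset.sum_congr rfl fun k _ => by rw [hR]
    rw [← h1, ← h2, mul_left_comm]
  have hnormalM : M * Mᴴ = Mᴴ * M := by
    rw [hMH]
    ext m j
    rw [Matrix.mul_apply, Matrix.mul_apply]
    simp only [Matrix.of_apply, hM]
    exact hD j m
  -- powers
  have hpow : ∀ m : ℕ, ∀ j, b.repr (b i ^ (m + 1)) j = ((M ^ (m + 1)) *ᵥ e) j := by
    intro m
    induction m with
    | zero =>
      intro j
      rw [pow_one, pow_one]
      have : b i = b i * 1 := (mul_one _).symm
      rw [this, hE]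
      rfl
    | succ k ih =>
      intro j
      have hstep : b i ^ (k + 2) = b i * b i ^ (k + 1) := by
        rw [pow_succ']
      rw [hstep, hE]
      have : ∀ l, b.repr (b i ^ (k + 1)) l = ((M ^ (k + 1)) *ᵥ e) l := ih
      calc ∑ t, (N i t j : ℂ) * b.repr (b i ^ (k + 1)) t
          = ∑ t, M j t * ((M ^ (k + 1)) *ᵥ e) t := by
            exact Finset.sum_congr rfl fun t _ => by rw [this t]; rfl
        _ = (M *ᵥ ((M ^ (k + 1)) *ᵥ e)) j := rfl
        _ = ((M ^ (k + 2)) *ᵥ e) j := by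
            rw [Matrix.mulVec_mulVec, ← pow_succ']
  -- translate the contradiction hypothesis
  have hzero : ∀ m : ℕ, 1 ≤ m → (∑ j, (starRingEnd ℂ) (e j) * ((M ^ m) *ᵥ e) j) = 0 := by
    intro m hm
    obtain ⟨k, rfl⟩ := Nat.exists_eq_add_of_le hm
    have := hcon (1 + k) hm
    rw [← this]
    refine Finset.sum_congr rfl fun j _ => ?_
    rw [add_comm 1 k, hpow k j]
  -- Euclidean space setup
  set v : EuclideanSpace ℂ (Fin n) := (WithLp.equiv 2 (Fin n → ℂ)).symm e with hv
  set f : EuclideanSpace ℂ (Fin n) →ₗ[ℂ] EuclideanSpace ℂ (Fin n) :=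
    Matrix.toEuclideanLin M with hf
  have hmulLin : ∀ P Q : Matrix (Fin n) (Fin n) ℂ,
      Matrix.toEuclideanLin (P * Q) = Matrix.toEuclideanLin P ∘ₗ Matrix.toEuclideanLin Q := by
    intro P Q
    apply LinearMap.ext
    intro x
    rw [LinearMap.comp_apply, Matrix.toEuclideanLin_apply, Matrix.toEuclideanLin_apply,
      Matrix.toEuclideanLin_apply]
    simp [Matrix.mulVec_mulVec]
  have hfpow : ∀ m : ℕ, (f ^ m) v = (WithLp.equiv 2 (Fin n → ℂ)).symm ((M ^ m) *ᵥ e) := by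
    intro m
    induction m with
    | zero => simp [hv]
    | succ k ih =>
      rw [pow_succ', Module.End.mul_apply, ih, hf,
        WithLp.equiv_symm_apply, Matrix.toEuclideanLin_apply_piLp_toLp, Matrix.mulVec_mulVec, ← pow_succ']
  have hinner : ∀ m : ℕ, 1 ≤ m → (inner ℂ v ((f ^ m) v) : ℂ) = 0 := by
    intro m hm
    rw [hfpow m]
    rw [PiLp.inner_apply]
    rw [← hzero m hm]
    exact Finset.sum_congr rfl fun j _ => mul_comm _ _
  have hadj : LinearMap.adjoint f = Matrix.toEuclideanLin Mᴴ := by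
    rw [hf, Matrix.toEuclideanLin_conjTranspose_eq_adjoint]
  have hnormal : LinearMap.adjoint f ∘ₗ f = f ∘ₗ LinearMap.adjoint f := by
    rw [hadj, hf, ← hmulLin, ← hmulLin, hnormalM]
  have hfv : f v = 0 := key_normal_lemma f hnormal v hinner
  have h1 : b.repr (b i ^ 1) i = ((M ^ 1) *ᵥ e) i := hpow 0 i
  have h2 : ((M ^ 1) *ᵥ e) i = 0 := by
    have : f v = (WithLp.equiv 2 (Fin n → ℂ)).symm ((M ^ 1) *ᵥ e) := by
      rw [← hfpow 1, pow_one]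
    rw [this] at hfv
    have := congrArg (fun z => WithLp.equiv 2 (Fin n → ℂ) z i) hfv
    simpa using this
  rw [h2] at h1
  rw [pow_one, b.repr_self] at h1
  simp at h1
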